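/- Let η ≤ γ ≤ ξ in {0,1}^ℤ and suppose g^l_{m,n}(η,γ,ξ) = 0 for all integers m ≤ n and all l ≥ 1. Then the triple (η,γ,ξ) lies in A_1 ∪ A_2 ∪ A_3 ∪ A_4, where A_1 = {γ = η}, A_2 = {γ = ξ}, A_3 = {∃x : γ(y)=η(y) for y ≤ x and γ(y)=ξ(y) for y > x, and γ ≠ η, γ ≠ ξ}, A_4 = {∃x : γ(y)=ξ(y) for y ≤ x and γ(y)=η(y) for y > x, and γ ≠ η, γ ≠ ξ}. Conversely, on A_1 ∪ A_2 ∪ A_3 ∪ A_4 all g^l_{m,n} vanish. -/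

import Mathlib

open Classical Finset

/-- Sites `x ∈ [m,n]` where `η x = 0` and `ξ x = 1`. -/
noncomputable def sites (η ξ : ℤ → Bool) (m n : ℤ) : Finset ℤ :=
  (Finset.Icc m n).filter (fun x => η x = false ∧ ξ x = true)

/-- The values of `γ` along the increasingly ordered sites of `[m,n]` where `η = 0`, `ξ = 1`. -/
noncomputable def gammaSeq (η γ ξ : ℤ → Bool) (m n : ℤ) : List Bool :=
  ((sites η ξ m n).sort (· ≤ ·)).map γ

/-- Number of adjacent sign changes in a list. -/
def changes : List Bool → ℕ
  | a :: b :: l => (if a ≠ b then 1 else 0) + changes (b :: l)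
  | _ => 0

/-- Number of maximal constant blocks of a list. -/
def blocks : List Bool → ℕ
  | [] => 0
  | a :: l => 1 + changes (a :: l)

/-- `f_{m,n}(η,γ,ξ)`: number of maximal constant blocks of `γ` along the
sites in `[m,n]` where `η = 0` and `ξ = 1`. -/
noncomputable def fCount (η γ ξ : ℤ → Bool) (m n : ℤ) : ℕ :=
  blocks (gammaSeq η γ ξ m n)

/-- Number of interior maximal constant blocks of length exactly `l` of a list `s`
(0-indexed: a block starting at index `i ≥ 1` with `i + l + 1 ≤ s.length`). -/
noncomputable def interiorBlocks (s : List Bool) (l : ℕ) : ℕ :=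
  ((Finset.range s.length).filter (fun i =>
    1 ≤ i ∧ i + l + 1 ≤ s.length ∧
    s.getD (i - 1) false ≠ s.getD i false ∧
    (∀ j, i ≤ j → j < i + l → s.getD j false = s.getD i false) ∧
    s.getD (i + l) false ≠ s.getD i false)).card

/-- `g^l_{m,n}(η,γ,ξ)`: number of interior maximal constant blocks of length `l` of `γ`
along the sites in `[m,n]` where `η = 0` and `ξ = 1`. -/
noncomputable def gCount (η γ ξ : ℤ → Bool) (m n : ℤ) (l : ℕ) : ℕ :=
  interiorBlocks (gammaSeq η γ ξ m n) l

/- ### Auxiliary lemmas -/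

lemma bool_le_ne : ∀ a b : Bool, a ≤ b → a ≠ b → a = false ∧ b = true := by decide

lemma bool_sandwich : ∀ a b c : Bool, a ≤ b → b ≤ c → ¬(a = false ∧ c = true) →
    b = a ∧ b = c := by decide

lemma bool_lt : ∀ a b : Bool, a < b → a = false ∧ b = true := by decide

lemma bool_not_le : ∀ a b : Bool, ¬(a ≤ b) → a = true ∧ b = false := by decide

lemma bool_true_le : ∀ b : Bool, true ≤ b → b = true := by decide

lemma bool_le_false : ∀ b : Bool, b ≤ false → b = false := by decide

lemma map_getD (γ : ℤ → Bool) (L : List ℤ) (i : ℕ) (h : i < L.length) :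
    (L.map γ).getD i false = γ (L.get ⟨i, h⟩) := by
  have h' : i < (L.map γ).length := by simpa using h
  simp [List.getD_eq_getElem?_getD, List.getElem?_eq_getElem h']

lemma exists_change (s : List Bool) (i j : ℕ) (hij : i < j)
    (hne : s.getD i false ≠ s.getD j false) :
    ∃ p, i < p ∧ p ≤ j ∧ s.getD (p - 1) false ≠ s.getD p false := by
  classical
  set T := (Finset.Ioc i j).filter (fun p => s.getD p false ≠ s.getD i false) with hT
  have hjT : j ∈ T :=
    Finset.mem_filter.2 ⟨Finset.mem_Ioc.2 ⟨hij, le_refl j⟩, fun e => hne e.symm⟩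
  have hne' : T.Nonempty := ⟨j, hjT⟩
  set p := T.min' hne' with hp
  have hpT : p ∈ T := T.min'_mem hne'
  have hpIoc : i < p ∧ p ≤ j := Finset.mem_Ioc.1 (Finset.mem_filter.1 hpT).1
  have hpne : s.getD p false ≠ s.getD i false := (Finset.mem_filter.1 hpT).2
  refine ⟨p, hpIoc.1, hpIoc.2, ?_⟩
  have hprev : s.getD (p - 1) false = s.getD i false := by
    rcases Nat.eq_or_lt_of_le (Nat.succ_le_of_lt hpIoc.1) with h | h
    · have hpi : p - 1 = i := by omega
      rw [hpi]
    · by_contra hco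
      have hmem : p - 1 ∈ T :=
        Finset.mem_filter.2 ⟨Finset.mem_Ioc.2 ⟨by omega, by omega⟩, hco⟩
      have := T.min'_le _ hmem
      omega
  rw [hprev]
  exact fun h => hpne h.symm

/-- The no-zigzag property of `γ` on the sites where `η = 0`, `ξ = 1`. -/
def NZ (η γ ξ : ℤ → Bool) : Prop :=
  ∀ a b c : ℤ, a < b → b < c →
    η a = false ∧ ξ a = true → η b = false ∧ ξ b = true → η c = false ∧ ξ c = true →
    γ a = γ b ∨ γ b = γ c

lemma gCount_eq_zero {η γ ξ : ℤ → Bool} (hnz : NZ η γ ξ) (m n : ℤ) (l : ℕ) (hl : 1 ≤ l) :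
    gCount η γ ξ m n l = 0 := by
  classical
  unfold gCount interiorBlocks
  rw [Finset.card_eq_zero, Finset.filter_eq_empty_iff]
  rintro i hi ⟨h1, h2, h3, _h4, h5⟩
  set L := (sites η ξ m n).sort (· ≤ ·) with hL
  have hgs : gammaSeq η γ ξ m n = L.map γ := rfl
  have hlen : (gammaSeq η γ ξ m n).length = L.length := by rw [hgs]; simp
  rw [Finset.mem_range] at hi
  have hi2 : i < L.length := by omega
  have hi1 : i - 1 < L.length := by omega
  have hi3 : i + l < L.length := by omega
  have sorted : L.SortedLT := Finset.sortedLT_sort _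
  have hmono := sorted.strictMono_get
  have hmem : ∀ (k : Fin L.length), η (L.get k) = false ∧ ξ (L.get k) = true := by
    intro k
    have hk : L.get k ∈ L := L.get_mem _
    have hk2 : L.get k ∈ sites η ξ m n := (Finset.mem_sort _).1 hk
    simp only [sites, Finset.mem_filter] at hk2
    exact hk2.2
  have hab : L.get ⟨i - 1, hi1⟩ < L.get ⟨i, hi2⟩ :=
    hmono (show (⟨i - 1, hi1⟩ : Fin L.length) < ⟨i, hi2⟩ from Fin.mk_lt_mk.2 (by omega))
  have hbc : L.get ⟨i, hi2⟩ < L.get ⟨i + l, hi3⟩ :=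
    hmono (show (⟨i, hi2⟩ : Fin L.length) < ⟨i + l, hi3⟩ from Fin.mk_lt_mk.2 (by omega))
  have e1 : (gammaSeq η γ ξ m n).getD (i - 1) false = γ (L.get ⟨i - 1, hi1⟩) := by
    rw [hgs]; exact map_getD γ L _ hi1
  have e2 : (gammaSeq η γ ξ m n).getD i false = γ (L.get ⟨i, hi2⟩) := by
    rw [hgs]; exact map_getD γ L _ hi2
  have e3 : (gammaSeq η γ ξ m n).getD (i + l) false = γ (L.get ⟨i + l, hi3⟩) := by
    rw [hgs]; exact map_getD γ L _ hi3
  rw [e1, e2] at h3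
  rw [e3, e2] at h5
  rcases hnz _ _ _ hab hbc (hmem _) (hmem _) (hmem _) with e | e
  · exact h3 e
  · exact h5 e.symm

lemma nz_of_H {η γ ξ : ℤ → Bool}
    (H : ∀ m n : ℤ, m ≤ n → ∀ l : ℕ, 1 ≤ l → gCount η γ ξ m n l = 0) :
    NZ η γ ξ := by
  classical
  intro a b c hab hbc haD hbD hcD
  by_contra hcon
  push_neg at hcon
  obtain ⟨h1, h2⟩ := hcon
  have hac : a ≤ c := le_of_lt (hab.trans hbc)
  set L := (sites η ξ a c).sort (· ≤ ·) with hL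
  set s := gammaSeq η γ ξ a c with hs
  have hgs : s = L.map γ := rfl
  have hslen : s.length = L.length := by rw [hgs]; simp
  have hmema : a ∈ L := by
    rw [hL, Finset.mem_sort]
    simp only [sites, Finset.mem_filter, Finset.mem_Icc]
    exact ⟨⟨le_refl a, hac⟩, haD⟩
  have hmemb : b ∈ L := by
    rw [hL, Finset.mem_sort]
    simp only [sites, Finset.mem_filter, Finset.mem_Icc]
    exact ⟨⟨le_of_lt hab, le_of_lt hbc⟩, hbD⟩
  have hmemc : c ∈ L := by
    rw [hL, Finset.mem_sort]
    simp only [sites, Finset.mem_filter, Finset.mem_Icc]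
    exact ⟨⟨hac, le_refl c⟩, hcD⟩
  set ia := L.idxOf a with hia0
  set ib := L.idxOf b with hib0
  set ic := L.idxOf c with hic0
  have hia : ia < L.length := List.idxOf_lt_length_iff.2 hmema
  have hib : ib < L.length := List.idxOf_lt_length_iff.2 hmemb
  have hic : ic < L.length := List.idxOf_lt_length_iff.2 hmemc
  have hga : L.get ⟨ia, hia⟩ = a := List.idxOf_get hia
  have hgb : L.get ⟨ib, hib⟩ = b := List.idxOf_get hib
  have hgc : L.get ⟨ic, hic⟩ = c := List.idxOf_get hic
  have sorted : L.SortedLT := Finset.sortedLT_sort _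
  have hmono := sorted.strictMono_get
  have h_iab : ia < ib := by
    have := hmono.lt_iff_lt (a := (⟨ia, hia⟩ : Fin L.length)) (b := ⟨ib, hib⟩)
    rw [hga, hgb] at this
    exact Fin.mk_lt_mk.1 (this.1 hab)
  have h_ibc : ib < ic := by
    have := hmono.lt_iff_lt (a := (⟨ib, hib⟩ : Fin L.length)) (b := ⟨ic, hic⟩)
    rw [hgb, hgc] at this
    exact Fin.mk_lt_mk.1 (this.1 hbc)
  have ea : s.getD ia false = γ a := by rw [hgs, map_getD γ L ia hia, hga]
  have eb : s.getD ib false = γ b := by rw [hgs, map_getD γ L ib hib, hgb]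
  have ec : s.getD ic false = γ c := by rw [hgs, map_getD γ L ic hic, hgc]
  obtain ⟨p0, hp01, hp02, hp03⟩ :=
    exists_change s ia ib h_iab (by rw [ea, eb]; exact h1)
  obtain ⟨q0, hq01, hq02, hq03⟩ :=
    exists_change s ib ic h_ibc (by rw [eb, ec]; exact h2)
  set S1 := (Finset.Ioc ia ib).filter
    (fun p => s.getD (p - 1) false ≠ s.getD p false) with hS1
  set S2 := (Finset.Ioc ib ic).filter
    (fun p => s.getD (p - 1) false ≠ s.getD p false) with hS2
  have hne1 : S1.Nonempty :=
    ⟨p0, Finset.mem_filter.2 ⟨Finset.mem_Ioc.2 ⟨hp01, hp02⟩, hp03⟩⟩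
  have hne2 : S2.Nonempty :=
    ⟨q0, Finset.mem_filter.2 ⟨Finset.mem_Ioc.2 ⟨hq01, hq02⟩, hq03⟩⟩
  set p := S1.max' hne1 with hpdef
  set q := S2.min' hne2 with hqdef
  have hpmem := S1.max'_mem hne1
  have hqmem := S2.min'_mem hne2
  have hp1 : ia < p := (Finset.mem_Ioc.1 (Finset.mem_filter.1 hpmem).1).1
  have hp2 : p ≤ ib := (Finset.mem_Ioc.1 (Finset.mem_filter.1 hpmem).1).2
  have hpch : s.getD (p - 1) false ≠ s.getD p false := (Finset.mem_filter.1 hpmem).2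
  have hq1 : ib < q := (Finset.mem_Ioc.1 (Finset.mem_filter.1 hqmem).1).1
  have hq2 : q ≤ ic := (Finset.mem_Ioc.1 (Finset.mem_filter.1 hqmem).1).2
  have hqch : s.getD (q - 1) false ≠ s.getD q false := (Finset.mem_filter.1 hqmem).2
  have hpq : p < q := lt_of_le_of_lt hp2 hq1
  have hnoch : ∀ r, p < r → r < q → s.getD (r - 1) false = s.getD r false := by
    intro r hr1 hr2
    by_contra hco
    rcases le_or_gt r ib with h | h
    · have hrS : r ∈ S1 := Finset.mem_filter.2 ⟨Finset.mem_Ioc.2 ⟨by omega, h⟩, hco⟩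
      have := S1.le_max' r hrS
      omega
    · have hrS : r ∈ S2 := Finset.mem_filter.2 ⟨Finset.mem_Ioc.2 ⟨h, by omega⟩, hco⟩
      have := S2.min'_le r hrS
      omega
  have hconst : ∀ j, p ≤ j → j < q → s.getD j false = s.getD p false := by
    intro j
    induction j with
    | zero =>
      intro h _
      have : p = 0 := Nat.le_zero.1 h
      rw [this]
    | succ j ih =>
      intro hpj hjq
      rcases Nat.eq_or_lt_of_le hpj with h | h
      · rw [← h]
      · have e := hnoch (j + 1) h hjq
        have e' : s.getD j false = s.getD (j + 1) false := by simpa using e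
        rw [← e']
        exact ih (by omega) (by omega)
  have hpfilter : p ∈ (Finset.range s.length).filter (fun i =>
      1 ≤ i ∧ i + (q - p) + 1 ≤ s.length ∧
      s.getD (i - 1) false ≠ s.getD i false ∧
      (∀ j, i ≤ j → j < i + (q - p) → s.getD j false = s.getD i false) ∧
      s.getD (i + (q - p)) false ≠ s.getD i false) := by
    refine Finset.mem_filter.2 ⟨Finset.mem_range.2 (by omega), by omega, by omega, hpch,
      ?_, ?_⟩
    · intro j hj1 hj2
      exact hconst j hj1 (by omega)
    · have hpqq : p + (q - p) = q := by omega
      rw [hpqq]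
      intro hco
      apply hqch
      rw [hconst (q - 1) (by omega) (by omega), hco]
  have hzero := H a c hac (q - p) (by omega)
  unfold gCount interiorBlocks at hzero
  rw [← hs] at hzero
  exact Finset.card_ne_zero_of_mem hpfilter hzero

lemma union_of_nz {η γ ξ : ℤ → Bool} (hηγ : ∀ x, η x ≤ γ x) (hγξ : ∀ x, γ x ≤ ξ x)
    (hnz : NZ η γ ξ) (h1 : γ ≠ η) (h2 : γ ≠ ξ) :
    (∃ x : ℤ, (∀ y : ℤ, y ≤ x → γ y = η y) ∧ (∀ y : ℤ, x < y → γ y = ξ y)) ∨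
    (∃ x : ℤ, (∀ y : ℤ, y ≤ x → γ y = ξ y) ∧ (∀ y : ℤ, x < y → γ y = η y)) := by
  classical
  have offD : ∀ y, ¬(η y = false ∧ ξ y = true) → γ y = η y ∧ γ y = ξ y := by
    intro y h
    exact bool_sandwich (η y) (γ y) (ξ y) (hηγ y) (hγξ y) h
  obtain ⟨u, hu⟩ : ∃ u, γ u ≠ η u := by
    by_contra h; push_neg at h; exact h1 (funext h)
  have hu3 := bool_le_ne (η u) (γ u) (hηγ u) (Ne.symm hu)
  have huξ : ξ u = true := bool_true_le _ (hu3.2 ▸ hγξ u)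
  have huD : η u = false ∧ ξ u = true := ⟨hu3.1, huξ⟩
  have huγ : γ u = true := hu3.2
  obtain ⟨v, hv⟩ : ∃ v, γ v ≠ ξ v := by
    by_contra h; push_neg at h; exact h2 (funext h)
  have hv3 := bool_le_ne (γ v) (ξ v) (hγξ v) hv
  have hvη : η v = false := bool_le_false _ (hv3.1 ▸ hηγ v)
  have hvD : η v = false ∧ ξ v = true := ⟨hvη, hv3.2⟩
  have hvγ : γ v = false := hv3.1
  by_cases hmono : ∀ x y : ℤ, x < y → (η x = false ∧ ξ x = true) →
      (η y = false ∧ ξ y = true) → γ x ≤ γ y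
  · left
    have hbdd : ∀ z, ((η z = false ∧ ξ z = true) ∧ γ z = false) → z ≤ u := by
      rintro z ⟨hzD, hz⟩
      by_contra hgt
      push_neg at hgt
      have hle := hmono u z hgt huD hzD
      rw [huγ, hz] at hle
      exact absurd hle (by decide)
    obtain ⟨x, hxP, hxmax⟩ := Int.exists_greatest_of_bdd ⟨u, hbdd⟩ ⟨v, hvD, hvγ⟩
    refine ⟨x, ?_, ?_⟩
    · intro y hy
      by_cases hyD : η y = false ∧ ξ y = true
      · rw [hyD.1]
        cases hgy : γ y with
        | false => rfl
        | true =>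
          rcases eq_or_lt_of_le hy with h | h
          · rw [h, hxP.2] at hgy; exact Bool.noConfusion hgy
          · have hle := hmono y x h hyD hxP.1
            rw [hgy, hxP.2] at hle
            exact absurd hle (by decide)
      · exact (offD y hyD).1
    · intro y hy
      by_cases hyD : η y = false ∧ ξ y = true
      · rw [hyD.2]
        cases hgy : γ y with
        | true => rfl
        | false =>
          have := hxmax y ⟨hyD, hgy⟩
          omega
      · exact (offD y hyD).2
  · right
    push_neg at hmono
    obtain ⟨a, b, hab, haD, hbD, hnle⟩ := hmono
    have hab' : γ a = true ∧ γ b = false := ⟨(bool_lt _ _ hnle).2, (bool_lt _ _ hnle).1⟩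
    have hanti : ∀ x y : ℤ, x < y → (η x = false ∧ ξ x = true) →
        (η y = false ∧ ξ y = true) → γ y ≤ γ x := by
      intro x y hxy hxD hyD
      by_contra hn
      have hxy' := bool_not_le _ _ hn
      rcases lt_trichotomy x a with h | h | h
      · rcases hnz x a b h hab hxD haD hbD with e | e
        · rw [hxy'.2, hab'.1] at e; exact Bool.noConfusion e
        · rw [hab'.1, hab'.2] at e; exact Bool.noConfusion e
      · have hc := hxy'.2
        rw [h, hab'.1] at hc
        exact Bool.noConfusion hc
      · rcases lt_trichotomy b y with h' | h' | h'
        · rcases hnz a b y hab h' haD hbD hyD with e | e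
          · rw [hab'.1, hab'.2] at e; exact Bool.noConfusion e
          · rw [hab'.2, hxy'.1] at e; exact Bool.noConfusion e
        · have hc := hxy'.1
          rw [← h', hab'.2] at hc
          exact Bool.noConfusion hc
        · rcases hnz x y b hxy h' hxD hyD hbD with e | e
          · rw [hxy'.2, hxy'.1] at e; exact Bool.noConfusion e
          · rw [hxy'.1, hab'.2] at e; exact Bool.noConfusion e
    have hbdd : ∀ z, ((η z = false ∧ ξ z = true) ∧ γ z = true) → z ≤ v := by
      rintro z ⟨hzD, hz⟩
      by_contra hgt
      push_neg at hgt
      have hle := hanti v z hgt hvD hzD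
      rw [hz, hvγ] at hle
      exact absurd hle (by decide)
    obtain ⟨x, hxP, hxmax⟩ := Int.exists_greatest_of_bdd ⟨v, hbdd⟩ ⟨u, huD, huγ⟩
    refine ⟨x, ?_, ?_⟩
    · intro y hy
      by_cases hyD : η y = false ∧ ξ y = true
      · rw [hyD.2]
        cases hgy : γ y with
        | true => rfl
        | false =>
          rcases eq_or_lt_of_le hy with h | h
          · rw [h, hxP.2] at hgy; exact Bool.noConfusion hgy
          · have hle := hanti y x h hyD hxP.1
            rw [hgy, hxP.2] at hle
            exact absurd hle (by decide)
      · exact (offD y hyD).2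
    · intro y hy
      by_cases hyD : η y = false ∧ ξ y = true
      · rw [hyD.1]
        cases hgy : γ y with
        | false => rfl
        | true =>
          have := hxmax y ⟨hyD, hgy⟩
          omega
      · exact (offD y hyD).1

lemma nz_of_union {η γ ξ : ℤ → Bool}
    (h : γ = η ∨ γ = ξ ∨
      ((∃ x : ℤ, (∀ y : ℤ, y ≤ x → γ y = η y) ∧ (∀ y : ℤ, x < y → γ y = ξ y)) ∧
        γ ≠ η ∧ γ ≠ ξ) ∨
      ((∃ x : ℤ, (∀ y : ℤ, y ≤ x → γ y = ξ y) ∧ (∀ y : ℤ, x < y → γ y = η y)) ∧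
        γ ≠ η ∧ γ ≠ ξ)) : NZ η γ ξ := by
  intro a b c hab hbc haD hbD hcD
  rcases h with h | h | ⟨⟨x, hx1, hx2⟩, _⟩ | ⟨⟨x, hx1, hx2⟩, _⟩
  · left; rw [h, haD.1, hbD.1]
  · left; rw [h, haD.2, hbD.2]
  · rcases le_or_gt b x with hbx | hbx
    · left; rw [hx1 a (by omega), hx1 b hbx, haD.1, hbD.1]
    · right; rw [hx2 b hbx, hx2 c (by omega), hbD.2, hcD.2]
  · rcases le_or_gt b x with hbx | hbx
    · left; rw [hx1 a (by omega), hx1 b hbx, haD.2, hbD.2]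
    · right; rw [hx2 b hbx, hx2 c (by omega), hbD.1, hcD.1]

/-- All `g^l_{m,n}` vanish iff `(η,γ,ξ)` lies in `A₁ ∪ A₂ ∪ A₃ ∪ A₄`: i.e. iff
`γ = η`, or `γ = ξ`, or `γ` agrees with `η` up to some point and with `ξ` afterwards
(and differs from both), or vice versa. -/
theorem g_vanish_iff (η γ ξ : ℤ → Bool)
    (hηγ : ∀ x, η x ≤ γ x) (hγξ : ∀ x, γ x ≤ ξ x) :
    (∀ m n : ℤ, m ≤ n → ∀ l : ℕ, 1 ≤ l → gCount η γ ξ m n l = 0) ↔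
      (γ = η ∨ γ = ξ ∨
        ((∃ x : ℤ, (∀ y : ℤ, y ≤ x → γ y = η y) ∧ (∀ y : ℤ, x < y → γ y = ξ y)) ∧
          γ ≠ η ∧ γ ≠ ξ) ∨
        ((∃ x : ℤ, (∀ y : ℤ, y ≤ x → γ y = ξ y) ∧ (∀ y : ℤ, x < y → γ y = η y)) ∧
          γ ≠ η ∧ γ ≠ ξ)) := by
  constructor
  · intro H
    by_cases h1 : γ = η
    · exact Or.inl h1
    by_cases h2 : γ = ξ
    · exact Or.inr (Or.inl h2)
    rcases union_of_nz hηγ hγξ (nz_of_H H) h1 h2 with h | h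
    · exact Or.inr (Or.inr (Or.inl ⟨h, h1, h2⟩))
    · exact Or.inr (Or.inr (Or.inr ⟨h, h1, h2⟩))
  · intro h m n _ l hl
    exact gCount_eq_zero (nz_of_union h) m n l hl
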